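/- Let H₀ be an open hemisphere of the sphere Sⁿ (n ≥ 1), i.e. H₀ = {x ∈ Sⁿ : ℓ₀(x) > 0} for some nonzero linear functional ℓ₀ on ℝ^{n+1}. If (H_i)_{i∈I} is a family of open hemispheres such that the intersections H₀ ∩ H_i are nonempty and pairwise disjoint, then the index set I has cardinality at most 2. -/

import Mathlib

open scoped RealInnerProductSpace

/-- A three-variable positivity helper: in a convex combination equation where two
terms have positive "values" and the third has nonpositive value, the coefficient of
the nonpositive term must be positive. -/
lemma pos_coeff_aux {α β γ X Y Z : ℝ} (hα : 0 ≤ α) (hβ : 0 ≤ β) (hγ : 0 ≤ γ)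
    (hs : α + β + γ = 1) (hX : 0 < X) (hY : 0 < Y) (hZ : Z ≤ 0)
    (he : α * X + β * Y + γ * Z = 0) : 0 < γ := by
  rcases lt_or_ge 0 γ with h | h
  · exact h
  · have hγ0 : γ = 0 := le_antisymm h hγ
    subst hγ0
    have hAX : 0 ≤ α * X := mul_nonneg hα hX.le
    have hBY : 0 ≤ β * Y := mul_nonneg hβ hY.le
    have hAX0 : α * X = 0 := by linarith
    have hBY0 : β * Y = 0 := by linarith
    have hA0 : α = 0 := by
      rcases mul_eq_zero.mp hAX0 with h' | h'
      · exact h'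
      · exact absurd h' hX.ne'
    have hB0 : β = 0 := by
      rcases mul_eq_zero.mp hBY0 with h' | h'
      · exact h'
      · exact absurd h' hY.ne'
    rw [hA0, hB0] at hs
    norm_num at hs

/-- Gordan's theorem for three linear functionals on a Euclidean space: if the
system `f x > 0, g x > 0, h x > 0` is infeasible, then `0` is a convex combination
of `f`, `g`, `h`. -/
lemma gordan3 {n : ℕ} (f g h : EuclideanSpace ℝ (Fin (n + 1)) →ₗ[ℝ] ℝ)
    (hinf : ∀ x, ¬ (0 < f x ∧ 0 < g x ∧ 0 < h x)) :
    ∃ α β γ : ℝ, 0 ≤ α ∧ 0 ≤ β ∧ 0 ≤ γ ∧ α + β + γ = 1 ∧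
      α • f + β • g + γ • h = 0 := by
  set E := EuclideanSpace ℝ (Fin (n + 1))
  -- Riesz representatives
  set u : E := (InnerProductSpace.toDual ℝ E).symm (LinearMap.toContinuousLinearMap f) with hu_def
  set a : E := (InnerProductSpace.toDual ℝ E).symm (LinearMap.toContinuousLinearMap g) with ha_def
  set b : E := (InnerProductSpace.toDual ℝ E).symm (LinearMap.toContinuousLinearMap h) with hb_def
  have hu : ∀ y : E, ⟪u, y⟫ = f y := fun y => by
    rw [hu_def, InnerProductSpace.toDual_symm_apply, LinearMap.coe_toContinuousLinearMap']
  have ha : ∀ y : E, ⟪a, y⟫ = g y := fun y => by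
    rw [ha_def, InnerProductSpace.toDual_symm_apply, LinearMap.coe_toContinuousLinearMap']
  have hb : ∀ y : E, ⟪b, y⟫ = h y := fun y => by
    rw [hb_def, InnerProductSpace.toDual_symm_apply, LinearMap.coe_toContinuousLinearMap']
  -- the linear map sending weights to combinations
  set T : (Fin 3 → ℝ) →ₗ[ℝ] E :=
    { toFun := fun w => w 0 • u + w 1 • a + w 2 • b
      map_add' := fun w₁ w₂ => by
        simp only [Pi.add_apply, add_smul]; abel
      map_smul' := fun c w => by
        simp only [Pi.smul_apply, smul_eq_mul, RingHom.id_apply, smul_add, smul_smul] } with hT_def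
  set S : Set E := T '' stdSimplex ℝ (Fin 3) with hS_def
  have hconv : Convex ℝ S := (convex_stdSimplex ℝ (Fin 3)).linear_image T
  have hcomp : IsCompact S :=
    (isCompact_stdSimplex ℝ (Fin 3)).image T.continuous_of_finiteDimensional
  by_cases h0 : (0 : E) ∈ S
  · obtain ⟨w, hw, hTw⟩ := h0
    refine ⟨w 0, w 1, w 2, hw.1 0, hw.1 1, hw.1 2, by simpa [Fin.sum_univ_three] using hw.2, ?_⟩
    have hvec : w 0 • u + w 1 • a + w 2 • b = 0 := hTw
    ext y
    have h1 := congrArg (fun z : E => ⟪z, y⟫) hvec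
    simp only [inner_add_left, real_inner_smul_left, hu, ha, hb, inner_zero_left] at h1
    simpa [LinearMap.add_apply, LinearMap.smul_apply, smul_eq_mul] using h1
  · exfalso
    obtain ⟨F, c, hc0, hcS⟩ := geometric_hahn_banach_point_closed hconv hcomp.isClosed h0
    have hc : 0 < c := by simpa using hc0
    have hmem : ∀ (v : E) (w : Fin 3 → ℝ), w ∈ stdSimplex ℝ (Fin 3) → T w = v → v ∈ S :=
      fun v w hw hTw => ⟨w, hw, hTw⟩
    have humem : u ∈ S := by
      refine hmem u ![1, 0, 0] ⟨fun i => by fin_cases i <;> norm_num,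
        by simp [Fin.sum_univ_three]⟩ ?_
      show (1 : ℝ) • u + (0 : ℝ) • a + (0 : ℝ) • b = u
      simp
    have hamem : a ∈ S := by
      refine hmem a ![0, 1, 0] ⟨fun i => by fin_cases i <;> norm_num,
        by simp [Fin.sum_univ_three]⟩ ?_
      show (0 : ℝ) • u + (1 : ℝ) • a + (0 : ℝ) • b = a
      simp
    have hbmem : b ∈ S := by
      refine hmem b ![0, 0, 1] ⟨fun i => by fin_cases i <;> norm_num,
        by simp [Fin.sum_univ_three]⟩ ?_
      show (0 : ℝ) • u + (0 : ℝ) • a + (1 : ℝ) • b = b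
      simp
    set x : E := (InnerProductSpace.toDual ℝ E).symm F with hx_def
    have hx : ∀ y : E, ⟪x, y⟫ = F y := fun y => by
      rw [hx_def, InnerProductSpace.toDual_symm_apply]
    refine hinf x ⟨?_, ?_, ?_⟩
    · rw [← hu x, real_inner_comm, hx]; exact hc.trans (hcS u humem)
    · rw [← ha x, real_inner_comm, hx]; exact hc.trans (hcS a hamem)
    · rw [← hb x, real_inner_comm, hx]; exact hc.trans (hcS b hbmem)

/-- The open hemisphere of the unit sphere `Sⁿ ⊂ ℝ^{n+1}` defined by a linear
functional `ℓ`. -/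
def hemisphere (n : ℕ) (ℓ : EuclideanSpace ℝ (Fin (n + 1)) →ₗ[ℝ] ℝ) :
    Set (EuclideanSpace ℝ (Fin (n + 1))) :=
  {x | x ∈ Metric.sphere (0 : EuclideanSpace ℝ (Fin (n + 1))) 1 ∧ ℓ x > 0}

set_option maxHeartbeats 1000000 in
/-- If `(H_i)_{i ∈ I}` is a family of open hemispheres such that the intersections
`H₀ ∩ H_i` are nonempty and pairwise disjoint, then `I` has at most 2 elements. -/
theorem hemisphere_family_card_le_two (n : ℕ) (hn : 1 ≤ n) {I : Type*}
    (ℓ₀ : EuclideanSpace ℝ (Fin (n + 1)) →ₗ[ℝ] ℝ) (hℓ₀ : ℓ₀ ≠ 0)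
    (ℓ : I → (EuclideanSpace ℝ (Fin (n + 1)) →ₗ[ℝ] ℝ)) (hℓ : ∀ i, ℓ i ≠ 0)
    (hne : ∀ i, (hemisphere n ℓ₀ ∩ hemisphere n (ℓ i)).Nonempty)
    (hdisj : ∀ i j, i ≠ j →
      (hemisphere n ℓ₀ ∩ hemisphere n (ℓ i)) ∩ (hemisphere n ℓ₀ ∩ hemisphere n (ℓ j)) = ∅) :
    ∀ i j k : I, i = j ∨ i = k ∨ j = k := by
  intro i j k
  by_contra hcon
  push_neg at hcon
  obtain ⟨hij, hik, hjk⟩ := hcon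
  -- Cone infeasibility from disjointness of lunes
  have key : ∀ (i' j' : I), i' ≠ j' →
      ∀ x : EuclideanSpace ℝ (Fin (n + 1)), ¬ (0 < ℓ₀ x ∧ 0 < ℓ i' x ∧ 0 < ℓ j' x) := by
    intro i' j' hij' x ⟨h0, h1, h2⟩
    have hx : x ≠ 0 := by
      intro hx0
      rw [hx0] at h0
      simp at h0
    set y := (‖x‖⁻¹ : ℝ) • x with hy_def
    have hy1 : ‖y‖ = 1 := norm_smul_inv_norm hx
    have hsph : y ∈ Metric.sphere (0 : EuclideanSpace ℝ (Fin (n + 1))) 1 := by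
      simpa [mem_sphere_iff_norm] using hy1
    have hnpos : (0 : ℝ) < ‖x‖⁻¹ := inv_pos.2 (norm_pos_iff.2 hx)
    have hy0 : 0 < ℓ₀ y := by
      rw [hy_def, map_smul, smul_eq_mul]; positivity
    have hyi : 0 < ℓ i' y := by
      rw [hy_def, map_smul, smul_eq_mul]; positivity
    have hyj : 0 < ℓ j' y := by
      rw [hy_def, map_smul, smul_eq_mul]; positivity
    have : y ∈ (hemisphere n ℓ₀ ∩ hemisphere n (ℓ i')) ∩
        (hemisphere n ℓ₀ ∩ hemisphere n (ℓ j')) :=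
      ⟨⟨⟨hsph, hy0⟩, ⟨hsph, hyi⟩⟩, ⟨⟨hsph, hy0⟩, ⟨hsph, hyj⟩⟩⟩
    rw [hdisj i' j' hij'] at this
    exact this
  -- Witnesses
  obtain ⟨p, hp⟩ := hne i
  obtain ⟨q, hq⟩ := hne j
  obtain ⟨r, hr⟩ := hne k
  have h0p : 0 < ℓ₀ p := hp.1.2
  have hip : 0 < ℓ i p := hp.2.2
  have h0q : 0 < ℓ₀ q := hq.1.2
  have hjq : 0 < ℓ j q := hq.2.2
  have h0r : 0 < ℓ₀ r := hr.1.2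
  have hkr : 0 < ℓ k r := hr.2.2
  -- cross sign conditions
  have hjp : ℓ j p ≤ 0 := not_lt.mp fun hh => key i j hij p ⟨h0p, hip, hh⟩
  have hkp : ℓ k p ≤ 0 := not_lt.mp fun hh => key i k hik p ⟨h0p, hip, hh⟩
  have hiq : ℓ i q ≤ 0 := not_lt.mp fun hh => key i j hij q ⟨h0q, hh, hjq⟩
  have hkq : ℓ k q ≤ 0 := not_lt.mp fun hh => key j k hjk q ⟨h0q, hjq, hh⟩
  have hir : ℓ i r ≤ 0 := not_lt.mp fun hh => key i k hik r ⟨h0r, hh, hkr⟩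
  have hjr : ℓ j r ≤ 0 := not_lt.mp fun hh => key j k hjk r ⟨h0r, hh, hkr⟩
  -- Gordan combinations
  obtain ⟨α₁, β₁, γ₁, hα₁, hβ₁, hγ₁, hs₁, he₁⟩ := gordan3 ℓ₀ (ℓ i) (ℓ j) (key i j hij)
  obtain ⟨α₂, β₂, γ₂, hα₂, hβ₂, hγ₂, hs₂, he₂⟩ := gordan3 ℓ₀ (ℓ i) (ℓ k) (key i k hik)
  obtain ⟨α₃, β₃, γ₃, hα₃, hβ₃, hγ₃, hs₃, he₃⟩ := gordan3 ℓ₀ (ℓ j) (ℓ k) (key j k hjk)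
  -- evaluate the combinations at the witnesses
  have ev : ∀ (F : EuclideanSpace ℝ (Fin (n + 1)) →ₗ[ℝ] ℝ)
      (α β γ : ℝ) (f g h : EuclideanSpace ℝ (Fin (n + 1)) →ₗ[ℝ] ℝ),
      α • f + β • g + γ • h = 0 → ∀ x, α * f x + β * g x + γ * h x = 0 := by
    intro F α β γ f g h he x
    have := congrArg (fun G : EuclideanSpace ℝ (Fin (n + 1)) →ₗ[ℝ] ℝ => G x) he
    simpa [LinearMap.add_apply, LinearMap.smul_apply, smul_eq_mul] using this
  have e1p := ev ℓ₀ α₁ β₁ γ₁ _ _ _ he₁ p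
  have e1q := ev ℓ₀ α₁ β₁ γ₁ _ _ _ he₁ q
  have e2p := ev ℓ₀ α₂ β₂ γ₂ _ _ _ he₂ p
  have e2r := ev ℓ₀ α₂ β₂ γ₂ _ _ _ he₂ r
  have e3q := ev ℓ₀ α₃ β₃ γ₃ _ _ _ he₃ q
  have e3r := ev ℓ₀ α₃ β₃ γ₃ _ _ _ he₃ r
  -- positivity of key coefficients
  have hγ₁p : 0 < γ₁ := pos_coeff_aux hα₁ hβ₁ hγ₁ hs₁ h0p hip hjp e1p
  have hβ₁p : 0 < β₁ :=
    pos_coeff_aux hα₁ hγ₁ hβ₁ (by linarith) h0q hjq hiq (by linarith)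
  have hγ₂p : 0 < γ₂ := pos_coeff_aux hα₂ hβ₂ hγ₂ hs₂ h0p hip hkp e2p
  have hβ₂p : 0 < β₂ :=
    pos_coeff_aux hα₂ hγ₂ hβ₂ (by linarith) h0r hkr hir (by linarith)
  have hγ₃p : 0 < γ₃ := pos_coeff_aux hα₃ hβ₃ hγ₃ hs₃ h0q hjq hkq e3q
  have hβ₃p : 0 < β₃ :=
    pos_coeff_aux hα₃ hγ₃ hβ₃ (by linarith) h0r hkr hjr (by linarith)
  -- eliminate ℓ j and ℓ k
  set μ : ℝ := γ₂ * β₃ * β₁ + γ₁ * γ₃ * β₂ with hμ_def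
  set lam : ℝ := γ₁ * γ₂ * α₃ - γ₂ * β₃ * α₁ - γ₁ * γ₃ * α₂ with hlam_def
  have hkey : μ • (ℓ i) - lam • ℓ₀ =
      (γ₂ * β₃) • (α₁ • ℓ₀ + β₁ • (ℓ i) + γ₁ • (ℓ j)) +
      (γ₁ * γ₃) • (α₂ • ℓ₀ + β₂ • (ℓ i) + γ₂ • (ℓ k)) -
      (γ₁ * γ₂) • (α₃ • ℓ₀ + β₃ • (ℓ j) + γ₃ • (ℓ k)) := by
    rw [hμ_def, hlam_def]; module
  rw [he₁, he₂, he₃] at hkey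
  simp only [smul_zero, add_zero, sub_zero, zero_add, zero_sub] at hkey
  have hfin : μ • (ℓ i) = lam • ℓ₀ := by
    have := sub_eq_zero.mp (by simpa using hkey)
    exact this
  have hμpos : 0 < μ := by
    rw [hμ_def]; positivity
  have efp : μ * ℓ i p = lam * ℓ₀ p := by
    have := congrArg (fun G : EuclideanSpace ℝ (Fin (n + 1)) →ₗ[ℝ] ℝ => G p) hfin
    simpa [LinearMap.smul_apply, smul_eq_mul] using this
  have efq : μ * ℓ i q = lam * ℓ₀ q := by
    have := congrArg (fun G : EuclideanSpace ℝ (Fin (n + 1)) →ₗ[ℝ] ℝ => G q) hfin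
    simpa [LinearMap.smul_apply, smul_eq_mul] using this
  have hlp : 0 < lam * ℓ₀ p := by rw [← efp]; exact mul_pos hμpos hip
  have hlampos : 0 < lam := by
    by_contra hcon2
    push_neg at hcon2
    have : lam * ℓ₀ p ≤ 0 := mul_nonpos_iff.mpr (Or.inr ⟨hcon2, h0p.le⟩)
    linarith
  have h1 : 0 < lam * ℓ₀ q := mul_pos hlampos h0q
  have h2 : μ * ℓ i q ≤ 0 := mul_nonpos_of_nonneg_of_nonpos hμpos.le hiq
  linarith
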